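/- (Atkinson normal form, sufficiency.) Let X ∈ Matrix(b,c,ℂ) be a block matrix X = [[x, W],[U, 0]] with respect to the blocking (r, b−r) × (r, c−r), where x is r×r, and suppose U·x^k·W = 0 for all k with 0 ≤ k ≤ r−1. Then rank(X) ≤ r. -/

import Mathlib

open Matrix

/-- Atkinson normal form, sufficiency (Proposition 5.2 of the paper).  If
`X = [[x, W], [U, 0]]` in block form with `x` of size `r×r`, and `U·x^k·W = 0`
for all `0 ≤ k ≤ r−1`, then `rank(X) ≤ r`. -/
theorem stmt9 (r p q : ℕ)
    (x : Matrix (Fin r) (Fin r) ℂ) (W : Matrix (Fin r) (Fin q) ℂ)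
    (U : Matrix (Fin p) (Fin r) ℂ)
    (h : ∀ k : ℕ, k ≤ r - 1 → U * x ^ k * W = 0) :
    (Matrix.fromBlocks x W U 0).rank ≤ r := by
  classical
  -- Step 1: extend the hypothesis to all powers via Cayley–Hamilton.
  have hK : ∀ k : ℕ, U * x ^ k * W = 0 := by
    rcases Nat.eq_zero_or_pos r with hr | hr
    · intro k
      have hx : x ^ k = x ^ 0 := by subst hr; exact Subsingleton.elim _ _
      rw [hx]
      exact h 0 (by omega)
    · -- `x ^ r` is a combination of lower powers
      have hm := x.charpoly_monic
      have hdeg : (Polynomial.X ^ r %ₘ x.charpoly).natDegree < r := by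
        have hlt := Polynomial.degree_modByMonic_lt (Polynomial.X ^ r) hm
        rcases eq_or_ne (Polynomial.X ^ r %ₘ x.charpoly) 0 with h0 | h0
        · rw [h0]; simpa using hr
        · rw [Polynomial.natDegree_lt_iff_degree_lt h0]
          have hcd : x.charpoly.degree = (r : ℕ) := by
            rw [Polynomial.degree_eq_natDegree hm.ne_zero, x.charpoly_natDegree_eq_dim,
              Fintype.card_fin]
          rwa [hcd] at hlt
      have hxr : x ^ r =
          ∑ i ∈ Finset.range r, (Polynomial.X ^ r %ₘ x.charpoly).coeff i • x ^ i := by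
        have h2 : (Polynomial.aeval x) (Polynomial.X ^ r %ₘ x.charpoly) = x ^ r := by
          rw [Polynomial.modByMonic_eq_sub_mul_div _ x.charpoly]
          simp [Matrix.aeval_self_charpoly]
        rw [← h2, Polynomial.aeval_eq_sum_range' hdeg]
      intro k
      induction k using Nat.strong_induction_on with
      | _ k ih =>
        rcases lt_or_ge k r with hk | hk
        · exact h k (by omega)
        · have hxk : x ^ k =
              ∑ i ∈ Finset.range r, (Polynomial.X ^ r %ₘ x.charpoly).coeff i • x ^ (k - r + i) := by
            calc x ^ k = x ^ (k - r) * x ^ r := by rw [← pow_add]; congr 1; omega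
            _ = _ := by
                rw [hxr, Finset.mul_sum]
                refine Finset.sum_congr rfl fun i _ => ?_
                rw [mul_smul_comm, ← pow_add]
          rw [hxk, Matrix.mul_sum, Matrix.sum_mul]
          refine Finset.sum_eq_zero fun i hi => ?_
          have hi' : i < r := Finset.mem_range.mp hi
          rw [Matrix.mul_smul, Matrix.smul_mul, ih (k - r + i) (by omega), smul_zero]
  -- Step 2: the invariant subspace generated by the columns of `W`.
  set K : Submodule ℂ (Fin r → ℂ) :=
    ⨆ k : ℕ, LinearMap.range (x ^ k * W).mulVecLin with hKdef
  have hWK : ∀ u : Fin q → ℂ, W *ᵥ u ∈ K := by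
    intro u
    have : W *ᵥ u ∈ LinearMap.range (x ^ 0 * W).mulVecLin :=
      ⟨u, by rw [Matrix.mulVecLin_apply, pow_zero, Matrix.one_mul]⟩
    exact Submodule.mem_iSup_of_mem 0 this
  have hxKle : K ≤ K.comap x.mulVecLin := by
    refine iSup_le fun k => ?_
    rintro _ ⟨u, rfl⟩
    have : x *ᵥ (x ^ k * W).mulVecLin u = (x ^ (k + 1) * W) *ᵥ u := by
      simp only [Matrix.mulVecLin_apply, Matrix.mulVec_mulVec]
      rw [← Matrix.mul_assoc, ← pow_succ']
    refine Submodule.mem_comap.mpr ?_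
    show x.mulVecLin _ ∈ K
    rw [Matrix.mulVecLin_apply, this]
    exact Submodule.mem_iSup_of_mem (k + 1) ⟨u, rfl⟩
  have hUK : ∀ v ∈ K, U *ᵥ v = 0 := by
    have : K ≤ LinearMap.ker U.mulVecLin := by
      refine iSup_le fun k => ?_
      rintro _ ⟨u, rfl⟩
      simp only [LinearMap.mem_ker, Matrix.mulVecLin_apply, Matrix.mulVec_mulVec]
      rw [← Matrix.mul_assoc, hK k, Matrix.zero_mulVec]
    intro v hv
    exact this hv
  -- Step 3: two linear maps into the codomain.
  let j : (Fin r → ℂ) →ₗ[ℂ] (Fin r ⊕ Fin p → ℂ) :=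
    { toFun := fun v => Sum.elim v 0
      map_add' := fun v w => by funext i; cases i <;> simp
      map_smul' := fun c v => by funext i; cases i <;> simp }
  let g : (Fin r → ℂ) →ₗ[ℂ] (Fin r ⊕ Fin p → ℂ) :=
    { toFun := fun v => Sum.elim (x *ᵥ v) (U *ᵥ v)
      map_add' := fun v w => by funext i; cases i <;> simp [Matrix.mulVec_add]
      map_smul' := fun c v => by funext i; cases i <;> simp [Matrix.mulVec_smul] }
  set V : Submodule ℂ (Fin r ⊕ Fin p → ℂ) := K.map j ⊔ LinearMap.range g with hVdef
  -- Step 4: the range of `X` is contained in `V`.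
  have hrange : LinearMap.range (Matrix.fromBlocks x W U 0).mulVecLin ≤ V := by
    rintro _ ⟨u, rfl⟩
    have hu : (Matrix.fromBlocks x W U 0).mulVecLin u
        = g (u ∘ Sum.inl) + j (W *ᵥ (u ∘ Sum.inr)) := by
      rw [Matrix.mulVecLin_apply, Matrix.fromBlocks_mulVec]
      funext i
      cases i <;> simp [g, j]
    rw [hu]
    exact add_mem (Submodule.mem_sup_right ⟨u ∘ Sum.inl, rfl⟩)
      (Submodule.mem_sup_left (Submodule.mem_map_of_mem (hWK _)))
  -- Step 5: `V` has dimension at most `r`.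
  obtain ⟨C, hC⟩ := Submodule.exists_isCompl K
  have hgK : Submodule.map g K ≤ Submodule.map j K := by
    rintro _ ⟨v, hv, rfl⟩
    have hxv : x *ᵥ v ∈ K := hxKle hv
    have : g v = j (x *ᵥ v) := by
      funext i
      cases i <;> simp [g, j, hUK v hv]
    rw [this]
    exact Submodule.mem_map_of_mem hxv
  have hVle : V ≤ Submodule.map j K ⊔ Submodule.map g C := by
    refine sup_le le_sup_left ?_
    rw [LinearMap.range_eq_map, ← hC.sup_eq_top, Submodule.map_sup]
    exact sup_le (le_trans hgK le_sup_left) le_sup_right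
  have hdim : Module.finrank ℂ V ≤ r := by
    have h1 : Module.finrank ℂ V ≤
        Module.finrank ℂ (Submodule.map j K ⊔ Submodule.map g C : Submodule ℂ _) :=
      Submodule.finrank_mono hVle
    have h2 : Module.finrank ℂ (Submodule.map j K ⊔ Submodule.map g C : Submodule ℂ _) ≤
        Module.finrank ℂ (Submodule.map j K) + Module.finrank ℂ (Submodule.map g C) := by
      have := Submodule.finrank_sup_add_finrank_inf_eq (Submodule.map j K) (Submodule.map g C)
      omega
    have h3 : Module.finrank ℂ (Submodule.map j K) ≤ Module.finrank ℂ K :=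
      Submodule.finrank_map_le _ _
    have h4 : Module.finrank ℂ (Submodule.map g C) ≤ Module.finrank ℂ C :=
      Submodule.finrank_map_le _ _
    have h5 : Module.finrank ℂ K + Module.finrank ℂ C = r := by
      rw [Submodule.finrank_add_eq_of_isCompl hC, Module.finrank_fintype_fun_eq_card,
        Fintype.card_fin]
    omega
  -- Conclusion.
  calc (Matrix.fromBlocks x W U 0).rank
      = Module.finrank ℂ (LinearMap.range (Matrix.fromBlocks x W U 0).mulVecLin) := rfl
    _ ≤ Module.finrank ℂ V := Submodule.finrank_mono hrange
    _ ≤ r := hdim
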